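/- Let 0 ≤ α < 1. If f is analytic on the open unit disk D with f(0) = 0, f'(0) = 1, and Re(1 + z f''(z)/f'(z)) > (1 + 3α)/(2(1+α)) for all z ∈ D, then Re f'(z) > (1+α)/2 for all z ∈ D. -/

import Mathlib

open Complex Metric

lemma endpoint_deriv {G : ℝ → ℝ} {d : ℝ} (hG : HasDerivAt G d 1) (h1 : G 1 = 0)
    (hle : ∀ t, 0 ≤ t → t < 1 → G t ≤ 0) : 0 ≤ d := by
  have hsub : Set.Iio (1:ℝ) ⊆ {(1:ℝ)}ᶜ := fun x hx => ne_of_lt hx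
  have ht := (hasDerivAt_iff_tendsto_slope.1 hG).mono_left (nhdsWithin_mono _ hsub)
  refine ge_of_tendsto ht ?_
  filter_upwards [Ioo_mem_nhdsLT_of_mem (by simp : (1:ℝ) ∈ Set.Ioc 0 1)] with t ht'
  rw [slope_def_field, h1]
  have h2 : G t ≤ 0 := hle t ht'.1.le ht'.2
  have h3 : t - 1 < 0 := by linarith [ht'.2]
  rw [div_nonneg_iff]
  right
  constructor <;> [simpa; linarith]

lemma hasDerivAt_normSq_comp {g : ℝ → ℂ} {g' : ℂ} {t : ℝ} (hg : HasDerivAt g g' t) :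
    HasDerivAt (fun s => Complex.normSq (g s)) (2 * ((g t).re * g'.re + (g t).im * g'.im)) t := by
  have hre : HasDerivAt (fun s => (g s).re) g'.re t :=
    (Complex.reCLM.hasFDerivAt.comp_hasDerivAt t hg)
  have him : HasDerivAt (fun s => (g s).im) g'.im t :=
    (Complex.imCLM.hasFDerivAt.comp_hasDerivAt t hg)
  have h := (hre.mul hre).add (him.mul him)
  have h2 : (fun s => Complex.normSq (g s))
      = fun x => (g x).re * (g x).re + (g x).im * (g x).im := by
    funext s; simp [Complex.normSq_apply]
  rw [h2]
  convert h using 1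
  · rfl
  · rfl
  · rfl
  ring

lemma key_normSq (α : ℝ) (P : ℂ) :
    Complex.normSq (P - (α:ℂ)) - Complex.normSq (1 - P)
      = 2 * (1 - α) * (P.re - (1 + α)/2) := by
  simp [Complex.normSq_apply, Complex.sub_re, Complex.sub_im, Complex.one_re, Complex.one_im,
    Complex.ofReal_re, Complex.ofReal_im]
  ring

set_option maxHeartbeats 1600000 in
theorem stmt_5 (α : ℝ) (hα0 : 0 ≤ α) (hα1 : α < 1)
    (f : ℂ → ℂ) (hf : DifferentiableOn ℂ f (ball 0 1))
    (hf0 : f 0 = 0) (hf'0 : deriv f 0 = 1)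
    (hf'ne : ∀ z ∈ ball (0:ℂ) 1, deriv f z ≠ 0)
    (hre : ∀ z ∈ ball (0:ℂ) 1,
      (1 + 3 * α) / (2 * (1 + α)) < (1 + z * deriv (deriv f) z / deriv f z).re) :
    ∀ z ∈ ball (0:ℂ) 1, (1 + α) / 2 < (deriv f z).re := by
  by_contra hcon
  push_neg at hcon
  obtain ⟨z₁, hz₁, hz₁le⟩ := hcon
  set p := deriv f with hp
  set q := deriv (deriv f) with hq
  set δ := (1 + α)/2 with hδ
  have hδ1 : δ < 1 := by rw [hδ]; linarith
  have hαδ : α < δ := by rw [hδ]; linarith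
  -- p is differentiable on the ball
  have hpd : DifferentiableOn ℂ p (ball 0 1) := by
    rw [hp]
    exact ((hf.analyticOnNhd isOpen_ball).deriv).differentiableOn
  have hpdiff : ∀ z : ℂ, ‖z‖ < 1 → DifferentiableAt ℂ p z := by
    intro z hz
    exact (hpd z (mem_ball_zero_iff.2 hz)).differentiableAt
      (isOpen_ball.mem_nhds (mem_ball_zero_iff.2 hz))
  -- the compact set of bad points
  have hr₁ : ‖z₁‖ < 1 := mem_ball_zero_iff.1 hz₁
  set K := closedBall (0:ℂ) ‖z₁‖ ∩ p ⁻¹' {v : ℂ | v.re ≤ δ} with hK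
  have hKc : IsCompact K := by
    refine IsCompact.of_isClosed_subset (isCompact_closedBall 0 ‖z₁‖) ?_ Set.inter_subset_left
    refine ContinuousOn.preimage_isClosed_of_isClosed
      (hpd.continuousOn.mono ?_) Metric.isClosed_closedBall
      (isClosed_Iic.preimage Complex.continuous_re)
    exact fun z hz => mem_ball_zero_iff.2 (lt_of_le_of_lt (mem_closedBall_zero_iff.1 hz) hr₁)
  have hz₁K : z₁ ∈ K := ⟨mem_closedBall_zero_iff.2 le_rfl, hz₁le⟩
  obtain ⟨z₀, hz₀K, hz₀min⟩ := hKc.exists_isMinOn ⟨z₁, hz₁K⟩ continuous_norm.continuousOn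
  rw [isMinOn_iff] at hz₀min
  set r₀ := ‖z₀‖ with hr₀
  have hr₀1 : r₀ < 1 := lt_of_le_of_lt (mem_closedBall_zero_iff.1 hz₀K.1) hr₁
  have hz₀δ : (p z₀).re ≤ δ := hz₀K.2
  have hr₀pos : 0 < r₀ := by
    rcases (norm_nonneg z₀).lt_or_eq with h | h
    · exact h
    · exfalso
      have hz0 : z₀ = 0 := by rwa [eq_comm, norm_eq_zero] at h
      rw [hz0, hf'0] at hz₀δ
      simp at hz₀δ
      linarith
  -- interior points are good
  have hint : ∀ z : ℂ, ‖z‖ < r₀ → δ < (p z).re := by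
    intro z hz
    by_contra hcz
    push_neg at hcz
    have hzK : z ∈ K := ⟨mem_closedBall_zero_iff.2 (le_of_lt (lt_of_lt_of_le hz
      (mem_closedBall_zero_iff.1 hz₀K.1))), hcz⟩
    exact absurd (hz₀min z hzK) (not_le.2 hz)
  -- closed ball bound
  have hcb : ∀ z : ℂ, ‖z‖ ≤ r₀ → δ ≤ (p z).re := by
    intro z hz
    rcases lt_or_eq_of_le hz with h | h
    · exact (hint z h).le
    · have hz1 : ‖z‖ < 1 := by rw [h]; exact hr₀1
      have hpc : ContinuousAt p z := (hpdiff z hz1).continuousAt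
      have h1 : Filter.Tendsto (fun t : ℝ => (t:ℂ) * z) (nhdsWithin 1 (Set.Iio 1)) (nhds z) := by
        have hcl : Continuous (fun t : ℝ => (t:ℂ) * z) :=
          Complex.continuous_ofReal.mul continuous_const
        have h2 := (hcl.tendsto (1:ℝ)).mono_left (nhdsWithin_le_nhds (s := Set.Iio (1:ℝ)))
        simpa using h2
      have ht : Filter.Tendsto (fun t : ℝ => (p ((t:ℂ) * z)).re) (nhdsWithin 1 (Set.Iio 1))
          (nhds ((p z).re)) :=
        (Complex.continuous_re.continuousAt.tendsto.comp (hpc.tendsto.comp h1))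
      refine ge_of_tendsto ht ?_
      filter_upwards [Ioo_mem_nhdsLT_of_mem (by simp : (1:ℝ) ∈ Set.Ioc 0 1)] with t ht'
      refine (hint _ ?_).le
      rw [norm_mul, Complex.norm_real, Real.norm_eq_abs, abs_of_pos ht'.1, ← h]
      nlinarith [ht'.1, ht'.2, norm_nonneg z, h ▸ hr₀pos]
  have hpne : ∀ z : ℂ, ‖z‖ ≤ r₀ → p z ≠ (α:ℂ) := by
    intro z hz hEq
    have := hcb z hz
    rw [hEq] at this
    simp at this
    linarith
  -- the auxiliary function w
  set w : ℂ → ℂ := fun z => (1 - p z) / (p z - α) with hwdef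
  have hw1 : ∀ z : ℂ, ‖z‖ ≤ r₀ → Complex.normSq (w z) ≤ 1 := by
    intro z hz
    have hd : 0 < Complex.normSq (p z - α) :=
      Complex.normSq_pos.2 (sub_ne_zero.2 (hpne z hz))
    rw [hwdef]
    simp only [map_div₀]
    rw [div_le_one hd]
    have := key_normSq α (p z)
    have h2 := hcb z hz
    nlinarith
  have hwz₀ : Complex.normSq (w z₀) = 1 := by
    have hd : 0 < Complex.normSq (p z₀ - α) :=
      Complex.normSq_pos.2 (sub_ne_zero.2 (hpne z₀ le_rfl))
    have hre0 : (p z₀).re = δ := le_antisymm hz₀δ (hcb z₀ le_rfl)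
    have := key_normSq α (p z₀)
    rw [hwdef]
    simp only [map_div₀]
    rw [div_eq_one_iff_eq hd.ne']
    nlinarith
  have hw0 : w 0 = 0 := by
    show (1 - p 0) / (p 0 - (α:ℂ)) = 0
    rw [hf'0]
    simp
  -- Schwarz lemma
  have hwdOn : DifferentiableOn ℂ w (ball 0 r₀) := by
    intro z hz
    have hz' : ‖z‖ < r₀ := mem_ball_zero_iff.1 hz
    exact (((differentiableAt_const (1:ℂ)).sub (hpdiff z (hz'.trans hr₀1))).div
      ((hpdiff z (hz'.trans hr₀1)).sub (differentiableAt_const _))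
      (sub_ne_zero.2 (hpne z hz'.le))).differentiableWithinAt
  have hschwarz : ∀ z : ℂ, ‖z‖ < r₀ → ‖w z‖ ≤ ‖z‖ / r₀ := by
    intro z hz
    have habs : ∀ y : ℂ, ‖y‖ ≤ r₀ → ‖w y‖ ≤ 1 := by
      intro y hy
      have := hw1 y hy
      rw [← Complex.sq_norm] at this
      nlinarith [norm_nonneg (w y)]
    have key : ∀ ε : ℝ, 0 < ε → ‖w z‖ ≤ ‖z‖ / r₀ + ε := by
      intro ε hε
      rcases eq_or_ne z 0 with rfl | hz0
      · rw [hw0]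
        simp
        positivity
      have hzpos : 0 < ‖z‖ := norm_pos_iff.2 hz0
      set ε' := ε * r₀ / ‖z‖ with hε'
      have hε'pos : 0 < ε' := by positivity
      have hmaps : Set.MapsTo w (ball 0 r₀) (ball (w 0) (1 + ε')) := by
        intro y hy
        rw [hw0, mem_ball_zero_iff]
        exact lt_of_le_of_lt (habs y (mem_ball_zero_iff.1 hy).le) (by linarith)
      have := Complex.dist_le_div_mul_dist_of_mapsTo_ball hwdOn (hmaps.mono_right ball_subset_closedBall) (mem_ball_zero_iff.2 hz)
      rw [hw0, dist_zero_right, dist_zero_right] at this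
      calc ‖w z‖ ≤ (1 + ε') / r₀ * ‖z‖ := this
        _ = ‖z‖ / r₀ + ε := by
            have hzne : ‖z‖ ≠ 0 := hzpos.ne'
            rw [hε']
            field_simp
    by_contra hcon2
    push_neg at hcon2
    have := key ((‖w z‖ - ‖z‖ / r₀)/2) (by linarith)
    linarith
  -- differentiability of w at z₀
  have hz₀b1 : z₀ ∈ ball (0:ℂ) 1 := mem_ball_zero_iff.2 hr₀1
  have hpz₀ : DifferentiableAt ℂ p z₀ := hpdiff z₀ hr₀1
  have hpz₀ne : p z₀ - (α:ℂ) ≠ 0 := sub_ne_zero.2 (hpne z₀ le_rfl)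
  have hwz₀diff : DifferentiableAt ℂ w z₀ := by
    rw [hwdef]
    exact ((differentiableAt_const _).sub hpz₀).div (hpz₀.sub (differentiableAt_const _)) hpz₀ne
  set w' := deriv w z₀ with hw'def
  have hw' : HasDerivAt w w' z₀ := hwz₀diff.hasDerivAt
  -- radial derivative : Re (z₀ w' conj(w z₀)) ≥ 1
  have hline : HasDerivAt (fun t : ℝ => (t:ℂ) * z₀) z₀ 1 :=
    (hasDerivAt_mul_const (x := ((1:ℝ):ℂ)) z₀).comp_ofReal
  have hg : HasDerivAt (fun t : ℝ => w ((t:ℂ) * z₀)) (z₀ • w') 1 :=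
    hw'.scomp_of_eq 1 hline (by simp)
  have hF := hasDerivAt_normSq_comp hg
  have hFval : HasDerivAt (fun t : ℝ => Complex.normSq (w ((t:ℂ) * z₀)))
      (2 * ((w z₀).re * (z₀ * w').re + (w z₀).im * (z₀ * w').im)) 1 := by
    simpa [smul_eq_mul] using hF
  have hsq : HasDerivAt (fun t : ℝ => t^2) 2 1 := by
    simpa using hasDerivAt_pow 2 (1:ℝ)
  have hG := hFval.sub hsq
  have hge : 0 ≤ 2 * ((w z₀).re * (z₀ * w').re + (w z₀).im * (z₀ * w').im) - 2 := by
    refine endpoint_deriv hG (by simp [hwz₀]) ?_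
    intro t ht0 ht1
    simp only [Pi.sub_apply, sub_nonpos]
    have hnorm : ‖(t:ℂ) * z₀‖ = t * r₀ := by
      rw [norm_mul, Complex.norm_real, Real.norm_eq_abs, _root_.abs_of_nonneg ht0]
    have hlt : ‖(t:ℂ) * z₀‖ < r₀ := by
      rw [hnorm]; nlinarith
    have hs := hschwarz _ hlt
    rw [hnorm, mul_div_assoc, div_self hr₀pos.ne', mul_one] at hs
    have h1 : Complex.normSq (w ((t:ℂ) * z₀)) = ‖w ((t:ℂ) * z₀)‖^2 := by
      rw [← Complex.sq_norm]
    rw [h1]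
    nlinarith [norm_nonneg (w ((t:ℂ) * z₀))]
  set c : ℂ := z₀ * w' * (starRingEnd ℂ) (w z₀) with hcdef
  have hcre : 1 ≤ c.re := by
    have hc1 : c.re = (w z₀).re * (z₀ * w').re + (w z₀).im * (z₀ * w').im := by
      rw [hcdef]
      simp [Complex.mul_re, Complex.conj_re, Complex.conj_im]
      ring
    rw [hc1]; linarith
  -- circular derivative : Im (z₀ w' conj(w z₀)) = 0
  have hcirc : ∀ s : ℝ, ‖Complex.exp ((s:ℂ) * Complex.I) * z₀‖ = r₀ := by
    intro s
    rw [norm_mul, Complex.norm_exp_ofReal_mul_I, one_mul,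
      hr₀]
  have hinner : HasDerivAt (fun s : ℝ => Complex.exp ((s:ℂ) * Complex.I) * z₀)
      (Complex.I * z₀) 0 := by
    have h1 : HasDerivAt (fun z : ℂ => Complex.exp (z * Complex.I) * z₀)
        (Complex.exp ((((0:ℝ)):ℂ) * Complex.I) * Complex.I * z₀) (((0:ℝ):ℂ)) :=
      ((hasDerivAt_mul_const Complex.I).cexp.mul_const z₀)
    have h2 := h1.comp_ofReal
    simpa using h2
  have hg₂ : HasDerivAt (fun s : ℝ => w (Complex.exp ((s:ℂ) * Complex.I) * z₀))
      ((Complex.I * z₀) • w') 0 :=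
    hw'.scomp_of_eq 0 hinner (by simp)
  have hH := hasDerivAt_normSq_comp hg₂
  have hmax : IsLocalMax (fun s : ℝ => Complex.normSq (w (Complex.exp ((s:ℂ) * Complex.I) * z₀))) 0 := by
    refine Filter.Eventually.of_forall fun s => ?_
    simp only
    have h1 := hw1 _ (hcirc s).le
    have h2 : Complex.normSq (w (Complex.exp (((0:ℝ):ℂ) * Complex.I) * z₀)) = 1 := by
      simpa using hwz₀
    rw [h2]
    exact h1
  have hzero := hmax.hasDerivAt_eq_zero hH
  have hcim : c.im = 0 := by
    have h3 : (w (Complex.exp (((0:ℝ):ℂ) * Complex.I) * z₀)) = w z₀ := by simp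
    rw [h3] at hzero
    have h4 : ((Complex.I * z₀) • w') = Complex.I * (z₀ * w') := by
      rw [smul_eq_mul]; ring
    rw [h4] at hzero
    have h5 : c.im = (z₀ * w').im * (w z₀).re - (z₀ * w').re * (w z₀).im := by
      rw [hcdef]
      simp [Complex.mul_im, Complex.conj_re, Complex.conj_im]
      ring
    simp only [Complex.mul_re, Complex.mul_im, Complex.I_re, Complex.I_im] at hzero
    rw [h5]
    simp only [Complex.mul_re, Complex.mul_im]
    linarith

  -- the derivative formula for w
  have hqp : deriv p = q := by rw [hp, hq]
  have hderiv : w' * (p z₀ - α)^2 = -(1 - (α:ℂ)) * q z₀ := by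
    have h1 : DifferentiableAt ℂ (fun z => (1:ℂ) - p z) z₀ := (differentiableAt_const _).sub hpz₀
    have h2 : DifferentiableAt ℂ (fun z => p z - (α:ℂ)) z₀ := hpz₀.sub (differentiableAt_const _)
    have hd : w' = (-(q z₀) * (p z₀ - α) - (1 - p z₀) * q z₀) / (p z₀ - α)^2 := by
      rw [hw'def, hwdef, deriv_fun_div h1 h2 hpz₀ne, deriv_const_sub, deriv_sub_const, hqp]
    rw [hd]
    field_simp
    ring
  have hW : w z₀ * (p z₀ - α) = 1 - p z₀ := by
    show ((1 - p z₀) / (p z₀ - α)) * (p z₀ - α) = 1 - p z₀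
    field_simp
  have hWc : w z₀ * (starRingEnd ℂ) (w z₀) = 1 := by
    rw [Complex.mul_conj, hwz₀, Complex.ofReal_one]
  have hmain : ((1:ℂ) - α) * (z₀ * q z₀) = -c * ((1 - p z₀) * (p z₀ - α)) := by
    rw [hcdef]
    linear_combination (-(z₀ * w' * (starRingEnd ℂ) (w z₀)) * (p z₀ - (α:ℂ))) * hW
      + (z₀ * w' * (p z₀ - (α:ℂ))^2) * hWc + z₀ * hderiv
  set k := c.re with hkdef
  have hkge : 1 ≤ k := hcre
  have hcplx : c = ((k:ℝ):ℂ) := by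
    apply Complex.ext
    · simp [hkdef]
    · simp [hcim]
  have hx : (p z₀).re = δ := le_antisymm hz₀δ (hcb z₀ le_rfl)
  have hp₀ne : p z₀ ≠ 0 := hf'ne z₀ hz₀b1
  have hn : 0 < Complex.normSq (p z₀) := Complex.normSq_pos.2 hp₀ne
  have h1α : (0:ℝ) < 1 - α := by linarith
  have h1αc : ((1:ℂ) - (α:ℂ)) ≠ 0 := by
    intro h
    have h2 := congrArg Complex.re h
    simp at h2
    linarith
  have hzq : z₀ * q z₀ = ((-k/(1-α) : ℝ) : ℂ) * ((1 - p z₀) * (p z₀ - α)) := by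
    apply mul_left_cancel₀ h1αc
    rw [hmain, hcplx]
    have h3 : ((1:ℂ) - (α:ℂ)) * ((-k/(1-α) : ℝ) : ℂ) = ((-k : ℝ) : ℂ) := by
      push_cast
      field_simp
    linear_combination (norm := (push_cast; ring1)) (-((1 - p z₀) * (p z₀ - (α:ℂ)))) * h3
  set x := (p z₀).re with hxdef
  set y := (p z₀).im with hydef
  set n := Complex.normSq (p z₀) with hndef
  have hBre : ((1 - p z₀) * (p z₀ - (α:ℂ))).re = (1-x)*(x-α) + y*y := by
    simp only [Complex.mul_re, Complex.sub_re, Complex.sub_im, Complex.one_re, Complex.one_im,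
      Complex.ofReal_re, Complex.ofReal_im]
    ring
  have hBim : ((1 - p z₀) * (p z₀ - (α:ℂ))).im = (1-x)*y - y*(x-α) := by
    simp only [Complex.mul_im, Complex.sub_re, Complex.sub_im, Complex.one_re, Complex.one_im,
      Complex.ofReal_re, Complex.ofReal_im]
    ring
  have hdivre : (z₀ * q z₀ / p z₀).re
      = (-k/(1-α)) * ( ((1-x)*(x-α)+y*y) * x / n + ((1-x)*y - y*(x-α)) * y / n ) := by
    rw [hzq, mul_div_assoc, Complex.re_ofReal_mul, Complex.div_re, hBre, hBim]
  set u := ((1-x)*(x-α)+y*y) * x + ((1-x)*y - y*(x-α)) * y with hudef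
  have hrew : (-k/(1-α)) * ( ((1-x)*(x-α)+y*y) * x / n + ((1-x)*y - y*(x-α)) * y / n )
      = -((k*u)/((1-α)*n)) := by
    rw [hudef, ← add_div, neg_div, neg_mul, div_mul_div_comm]
  have hdpos : 0 < (1-α) * n := mul_pos h1α hn
  have hnval : n = x*x + y*y := by rw [hndef, Complex.normSq_apply]
  have hq2 : (1 - (1+3*α)/(2*(1+α))) * ((1-α) * n) ≤ k * u := by
    have hβ : 1 - (1+3*α)/(2*(1+α)) = (1-α)/(2*(1+α)) := by
      field_simp
      ring
    rw [hβ, hnval, hudef, hx, hδ]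
    rw [div_mul_eq_mul_div, div_le_iff₀ (by linarith : (0:ℝ) < 2*(1+α))]
    nlinarith [sq_nonneg y, mul_nonneg hα0 (sq_nonneg y), sub_nonneg.2 hkge,
      mul_nonneg (sub_nonneg.2 hkge) (sq_nonneg y),
      mul_nonneg (sub_nonneg.2 hkge) (sq_nonneg (1-α)),
      mul_nonneg (mul_nonneg (sub_nonneg.2 hkge) (sq_nonneg y)) (by linarith : (0:ℝ) ≤ 1+α),
      mul_nonneg (mul_nonneg (sub_nonneg.2 hkge) (sq_nonneg (1-α))) (by linarith : (0:ℝ) ≤ 1+α)]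
  have h3 : 1 - (1+3*α)/(2*(1+α)) ≤ (k*u)/((1-α)*n) := (le_div_iff₀ hdpos).2 hq2
  refine absurd (hre z₀ hz₀b1) (not_lt.2 ?_)
  rw [Complex.add_re, Complex.one_re, hdivre, hrew]
  linarith
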